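/- arXiv:2309.16156 — 2 statements merged into one kernel-verified Lean document; each statement's English description precedes it below -/
import Mathlib

section
/- Let T be a tree with n ≥ 3 vertices and l leaves, with distance matrix D. Let λ be the largest eigenvalue of D (the Perron root) and let η ∈ ℝⁿ be an entrywise nonnegative eigenvector with Dη = λη and ‖η‖₂ = 1. Then ⟨η, 𝟏⟩² > (n/2)·(λ/(λ−l+2)) + (n−l−1)/(λ−l+2). -/
open Finset SimpleGraph

set_option linter.unusedSectionVars false
set_option linter.unusedVariables false
set_option maxHeartbeats 1000000

namespace Stmt17Aux

variable {V : Type*} [Fintype V] [DecidableEq V] (T : SimpleGraph V) [DecidableRel T.Adj]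

lemma isPath_concat {u v w : V} {p : T.Walk u v} (hp : p.IsPath) (h : T.Adj v w)
    (hw : w ∉ p.support) : (p.concat h).IsPath := by
  rw [← SimpleGraph.Walk.isPath_reverse_iff, SimpleGraph.Walk.reverse_concat]
  exact hp.reverse.cons (by simpa [SimpleGraph.Walk.support_reverse] using hw)

lemma exists_closer (hconn : T.Connected) {i k : V} (hik : i ≠ k) :
    ∃ j, T.Adj k j ∧ T.dist i j + 1 = T.dist i k := by
  obtain ⟨p, hp, hlen⟩ := hconn.exists_path_of_dist k i
  obtain ⟨j, hadj, q, rfl⟩ := SimpleGraph.Walk.exists_eq_cons_of_ne (Ne.symm hik) p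
  refine ⟨j, hadj, ?_⟩
  have h1 : T.dist j i ≤ q.length := SimpleGraph.dist_le q
  have h2 : T.dist i k ≤ T.dist i j + T.dist j k := hconn.dist_triangle
  have h3 : T.dist j k = 1 := SimpleGraph.dist_eq_one_iff_adj.mpr hadj.symm
  have h4 : q.length + 1 = T.dist k i := by simpa using hlen
  have h5 : T.dist k i = T.dist i k := SimpleGraph.dist_comm ..
  have h6 : T.dist j i = T.dist i j := SimpleGraph.dist_comm ..
  omega

lemma dist_ne (hconn : T.Connected) (hacyc : T.IsAcyclic) {j k : V} (hjk : T.Adj j k)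
    (i : V) : T.dist i j ≠ T.dist i k := by
  intro heq
  obtain ⟨p, hp, hlp⟩ := hconn.exists_path_of_dist i j
  obtain ⟨q, hq, hlq⟩ := hconn.exists_path_of_dist i k
  by_cases hk : k ∈ p.support
  · have hsplit := congr_arg SimpleGraph.Walk.length (p.take_spec hk)
    rw [SimpleGraph.Walk.length_append] at hsplit
    have h1 : T.dist i k ≤ (p.takeUntil k hk).length := SimpleGraph.dist_le _
    have h2 : (p.dropUntil k hk).length ≠ 0 := fun h0 =>
      hjk.ne' (SimpleGraph.Walk.eq_of_length_eq_zero h0)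
    omega
  · have hp' : (p.concat hjk).IsPath := isPath_concat T hp hjk hk
    have hun := SimpleGraph.isAcyclic_iff_path_unique.mp hacyc
      ⟨p.concat hjk, hp'⟩ ⟨q, hq⟩
    have hlen := congr_arg (fun r : T.Path i k => (r : T.Walk i k).length) hun
    simp only [SimpleGraph.Walk.length_concat] at hlen
    omega

lemma dist_dichot (hconn : T.Connected) (hacyc : T.IsAcyclic) {j k : V} (hjk : T.Adj j k)
    (i : V) : T.dist i j + 1 = T.dist i k ∨ T.dist i k + 1 = T.dist i j := by
  have h1 : T.dist i k ≤ T.dist i j + T.dist j k := hconn.dist_triangle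
  have h2 : T.dist i j ≤ T.dist i k + T.dist k j := hconn.dist_triangle
  have h3 : T.dist j k = 1 := SimpleGraph.dist_eq_one_iff_adj.mpr hjk
  have h4 : T.dist k j = 1 := SimpleGraph.dist_eq_one_iff_adj.mpr hjk.symm
  have h5 := dist_ne T hconn hacyc hjk i
  omega

lemma closer_unique (hconn : T.Connected) (hacyc : T.IsAcyclic) {i k j1 j2 : V}
    (h1 : T.Adj k j1) (h2 : T.Adj k j2)
    (hd1 : T.dist i j1 + 1 = T.dist i k) (hd2 : T.dist i j2 + 1 = T.dist i k) :
    j1 = j2 := by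
  obtain ⟨p1, hp1, hl1⟩ := hconn.exists_path_of_dist i j1
  obtain ⟨p2, hp2, hl2⟩ := hconn.exists_path_of_dist i j2
  have hk1 : k ∉ p1.support := by
    intro hk
    have ha := SimpleGraph.dist_le (p1.takeUntil k hk)
    have hb := SimpleGraph.Walk.length_takeUntil_le p1 hk
    omega
  have hk2 : k ∉ p2.support := by
    intro hk
    have ha := SimpleGraph.dist_le (p2.takeUntil k hk)
    have hb := SimpleGraph.Walk.length_takeUntil_le p2 hk
    omega
  have hpath1 : (p1.concat h1.symm).IsPath := isPath_concat T hp1 h1.symm hk1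
  have hpath2 : (p2.concat h2.symm).IsPath := isPath_concat T hp2 h2.symm hk2
  have hun := SimpleGraph.isAcyclic_iff_path_unique.mp hacyc
    ⟨p1.concat h1.symm, hpath1⟩ ⟨p2.concat h2.symm, hpath2⟩
  have hw : p1.concat h1.symm = p2.concat h2.symm := congr_arg Subtype.val hun
  obtain ⟨hv, -⟩ := SimpleGraph.Walk.concat_inj hw
  exact hv


lemma sum_dist_self (k : V) :
    ∑ j ∈ T.neighborFinset k, (T.dist k j : ℝ) = T.degree k := by
  have h : ∀ j ∈ T.neighborFinset k, (T.dist k j : ℝ) = 1 := by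
    intro j hj
    rw [SimpleGraph.dist_eq_one_iff_adj.mpr (by simpa using hj)]
    norm_num
  rw [Finset.sum_congr rfl h, Finset.sum_const, SimpleGraph.card_neighborFinset_eq_degree]
  simp

lemma sum_dist_neighbors (hconn : T.Connected) (hacyc : T.IsAcyclic) (i k : V) (hik : i ≠ k) :
    ∑ j ∈ T.neighborFinset k, (T.dist i j : ℝ)
      = (T.degree k : ℝ) * ((T.dist i k : ℝ) + 1) - 2 := by
  obtain ⟨j0, hj0, hd0⟩ := exists_closer T hconn hik
  have hj0mem : j0 ∈ T.neighborFinset k := by simpa using hj0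
  rw [← Finset.add_sum_erase _ _ hj0mem]
  have hrest : ∀ j ∈ (T.neighborFinset k).erase j0,
      (T.dist i j : ℝ) = (T.dist i k : ℝ) + 1 := by
    intro j hj
    obtain ⟨hne, hmem⟩ := Finset.mem_erase.mp hj
    have hadj : T.Adj k j := by simpa using hmem
    rcases dist_dichot T hconn hacyc hadj.symm i with h | h
    · exact absurd (closer_unique T hconn hacyc hadj hj0 h hd0) hne
    · rw [← h]; push_cast; ring
  rw [Finset.sum_congr rfl hrest, Finset.sum_const, Finset.card_erase_of_mem hj0mem,
      SimpleGraph.card_neighborFinset_eq_degree]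
  have hdeg : 1 ≤ T.degree k := by
    have : 0 < (T.neighborFinset k).card := Finset.card_pos.mpr ⟨j0, hj0mem⟩
    rwa [SimpleGraph.card_neighborFinset_eq_degree] at this
  have hc : (T.dist i j0 : ℝ) = (T.dist i k : ℝ) - 1 := by
    have := congr_arg (fun m : ℕ => (m : ℝ)) hd0
    push_cast at this
    linarith
  rw [hc, nsmul_eq_mul, Nat.cast_sub hdeg]
  push_cast
  ring

lemma swap_nbrs (f : V → V → ℝ) :
    ∑ k, ∑ j ∈ T.neighborFinset k, f k j = ∑ k, ∑ j ∈ T.neighborFinset k, f j k := by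
  simp only [SimpleGraph.neighborFinset_eq_filter, Finset.sum_filter]
  rw [Finset.sum_comm]
  apply Finset.sum_congr rfl
  intro k _
  apply Finset.sum_congr rfl
  intro j _
  simp only [SimpleGraph.adj_comm]

lemma psd (z : V → ℝ) :
    0 ≤ ∑ k, z k * ((T.degree k : ℝ) * z k - ∑ j ∈ T.neighborFinset k, z j) := by
  have hdeg : ∀ k, ∑ j ∈ T.neighborFinset k, z k ^ 2 = (T.degree k : ℝ) * z k ^ 2 := by
    intro k
    rw [Finset.sum_const, SimpleGraph.card_neighborFinset_eq_degree, nsmul_eq_mul]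
  have hQ : ∑ k, z k * ((T.degree k : ℝ) * z k - ∑ j ∈ T.neighborFinset k, z j)
      = ∑ k, ∑ j ∈ T.neighborFinset k, (z k ^ 2 - z k * z j) := by
    apply Finset.sum_congr rfl
    intro k _
    rw [Finset.sum_sub_distrib, hdeg, mul_sub, Finset.mul_sum]
    ring
  have hQ2 : ∑ k, ∑ j ∈ T.neighborFinset k, (z k ^ 2 - z k * z j)
      = ∑ k, ∑ j ∈ T.neighborFinset k, (z j ^ 2 - z j * z k) :=
    swap_nbrs T fun a b => z a ^ 2 - z a * z b
  have hsum : (2:ℝ) * ∑ k, ∑ j ∈ T.neighborFinset k, (z k ^ 2 - z k * z j)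
      = ∑ k, ∑ j ∈ T.neighborFinset k, (z k - z j) ^ 2 := by
    rw [two_mul]
    nth_rewrite 2 [hQ2]
    rw [← Finset.sum_add_distrib]
    apply Finset.sum_congr rfl
    intro k _
    rw [← Finset.sum_add_distrib]
    apply Finset.sum_congr rfl
    intro j _
    ring
  have hpos : 0 ≤ ∑ k, ∑ j ∈ T.neighborFinset k, (z k - z j) ^ 2 :=
    Finset.sum_nonneg fun k _ => Finset.sum_nonneg fun j _ => sq_nonneg _
  rw [hQ]
  linarith

lemma LD (hconn : T.Connected) (hacyc : T.IsAcyclic) (x : V → ℝ) (k : V) :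
    (T.degree k : ℝ) * (∑ m, (T.dist k m : ℝ) * x m)
      - ∑ j ∈ T.neighborFinset k, (∑ m, (T.dist j m : ℝ) * x m)
    = (2 - T.degree k) * (∑ m, x m) - 2 * x k := by
  have hswap : ∑ j ∈ T.neighborFinset k, ∑ m, (T.dist j m : ℝ) * x m
      = ∑ m, (∑ j ∈ T.neighborFinset k, (T.dist m j : ℝ)) * x m := by
    rw [Finset.sum_comm]
    apply Finset.sum_congr rfl
    intro m _
    rw [Finset.sum_mul]
    apply Finset.sum_congr rfl
    intro j _
    rw [SimpleGraph.dist_comm]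
  rw [hswap, Finset.mul_sum, ← Finset.sum_sub_distrib]
  have key : ∀ m, (T.degree k : ℝ) * ((T.dist k m : ℝ) * x m)
      - (∑ j ∈ T.neighborFinset k, (T.dist m j : ℝ)) * x m
      = (2 - T.degree k) * x m - (if m = k then 2 * x m else 0) := by
    intro m
    by_cases hm : m = k
    · subst hm
      rw [sum_dist_self T m, if_pos rfl, SimpleGraph.dist_self]
      push_cast
      ring
    · rw [sum_dist_neighbors T hconn hacyc m k hm, if_neg hm,
        SimpleGraph.dist_comm]
      ring
  rw [Finset.sum_congr rfl fun m _ => key m, Finset.sum_sub_distrib, ← Finset.mul_sum,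
    Finset.sum_ite_eq' Finset.univ k fun m => 2 * x m, if_pos (Finset.mem_univ k)]

end Stmt17Aux

/-- Let `T` be a tree on `n ≥ 3` vertices with `l` leaves and distance
matrix `D`, let `λ` be the Perron root of `D` and `η` an entrywise nonnegative unit
eigenvector for `λ`.  Then `⟨η,𝟏⟩² > (n/2)·(λ/(λ−l+2)) + (n−l−1)/(λ−l+2)`. -/
theorem stmt_17 {V : Type*} [Fintype V] [DecidableEq V]
    (T : SimpleGraph V) [DecidableRel T.Adj]
    (hconn : T.Connected) (hacyc : T.IsAcyclic)
    (hn : 3 ≤ Fintype.card V)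
    (D : Matrix V V ℝ) (hD : ∀ a b, D a b = (T.dist a b : ℝ))
    (lam : ℝ) (η : V → ℝ)
    (hη0 : ∀ i, 0 ≤ η i) (hηnorm : ∑ i, (η i) ^ 2 = 1)
    (hηeig : D.mulVec η = lam • η)
    (hmax : ∀ μ : ℝ, (∃ x : V → ℝ, x ≠ 0 ∧ D.mulVec x = μ • x) → μ ≤ lam)
    (l : ℝ) (hl : l = ((Finset.univ.filter fun x : V => T.degree x = 1).card : ℝ))
    (n : ℝ) (hn' : n = (Fintype.card V : ℝ)) :
    (∑ i, η i) ^ 2 > n / 2 * (lam / (lam - l + 2)) + (n - l - 1) / (lam - l + 2) := by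
  classical
  have hTree : T.IsTree := ⟨hconn, hacyc⟩
  have hn3 : (3:ℝ) ≤ n := by rw [hn']; exact_mod_cast hn
  set s : ℝ := ∑ i, η i with hs
  have heig : ∀ a, ∑ b, (T.dist a b : ℝ) * η b = lam * η a := by
    intro a
    have h := congr_fun hηeig a
    simpa [Matrix.mulVec, dotProduct, hD] using h
  have hs0 : 0 ≤ s := Finset.sum_nonneg fun i _ => hη0 i
  have hs1 : 1 ≤ s := by
    have h1 : (1:ℝ) ≤ s * s := by
      rw [← hηnorm]
      calc ∑ i, η i ^ 2 ≤ ∑ i, η i * s := by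
            apply Finset.sum_le_sum
            intro i _
            have hle : η i ≤ s := Finset.single_le_sum (fun j _ => hη0 j) (Finset.mem_univ i)
            nlinarith [hη0 i]
        _ = s * s := by rw [← Finset.sum_mul]
    nlinarith
  have hspos : 0 < s := by linarith
  -- transmissions
  set Tr : V → ℝ := fun a => ∑ b, (T.dist a b : ℝ) with hTrdef
  have hTrsym : ∀ b, ∑ a, (T.dist a b : ℝ) = Tr b := by
    intro b
    apply Finset.sum_congr rfl
    intro a _
    rw [SimpleGraph.dist_comm]
  have hTrlb : ∀ a, n - 1 ≤ Tr a := by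
    intro a
    have h2 : Tr a = ∑ b ∈ Finset.univ.erase a, (T.dist a b : ℝ) := by
      show (∑ b, (T.dist a b : ℝ)) = _
      rw [← Finset.add_sum_erase _ _ (Finset.mem_univ a), SimpleGraph.dist_self]
      simp
    have h1 : ∑ b ∈ Finset.univ.erase a, (1:ℝ) ≤ ∑ b ∈ Finset.univ.erase a, (T.dist a b : ℝ) := by
      apply Finset.sum_le_sum
      intro b hb
      have hba : a ≠ b := fun h => (Finset.mem_erase.mp hb).1 h.symm
      exact_mod_cast hconn.pos_dist_of_ne hba
    have h3 : ∑ b ∈ Finset.univ.erase a, (1:ℝ) = n - 1 := by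
      rw [Finset.sum_const, Finset.card_erase_of_mem (Finset.mem_univ a), Finset.card_univ,
        nsmul_eq_mul, mul_one, Nat.cast_sub (by omega), Nat.cast_one, hn']
    rw [h2, ← h3]
    exact h1
  have hTreta : ∑ a, Tr a * η a = lam * s := by
    have : lam * s = ∑ a, lam * η a := by rw [Finset.mul_sum]
    rw [this]
    calc ∑ a, Tr a * η a = ∑ a, ∑ b, (T.dist b a : ℝ) * η a := by
          apply Finset.sum_congr rfl
          intro a _
          rw [← hTrsym a, Finset.sum_mul]
      _ = ∑ b, ∑ a, (T.dist b a : ℝ) * η a := Finset.sum_comm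
      _ = ∑ b, lam * η b := by
          apply Finset.sum_congr rfl
          intro b _
          exact heig b
  have hlamlb : n - 1 ≤ lam := by
    have h2 : (n-1) * s ≤ lam * s := by
      rw [← hTreta, Finset.mul_sum]
      exact Finset.sum_le_sum fun a _ => mul_le_mul_of_nonneg_right (hTrlb a) (hη0 a)
    exact le_of_mul_le_mul_right h2 hspos
  have hlampos : 0 < lam := by linarith
  set S : ℝ := ∑ a, Tr a with hSdef
  -- degree sum
  have hdegsum : ∑ a, (T.degree a : ℝ) = 2 * (n - 1) := by
    have h1 := T.sum_degrees_eq_twice_card_edges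
    have h2 := hTree.card_edgeFinset
    have h3 : ∑ a, T.degree a = 2 * (Fintype.card V - 1) := by omega
    rw [hn']
    calc ∑ a, (T.degree a : ℝ) = ((∑ a, T.degree a : ℕ) : ℝ) := by push_cast; ring
      _ = ((2 * (Fintype.card V - 1) : ℕ) : ℝ) := by rw [h3]
      _ = 2 * ((Fintype.card V : ℝ) - 1) := by
          rw [Nat.cast_mul, Nat.cast_sub (by omega)]
          push_cast
          ring
  -- S lower bound
  have hS : 2 * (n-1)^2 ≤ S := by
    have hpt : ∀ a b : V, ((if a = b then 0 else 2) - (if T.Adj a b then 1 else 0) : ℝ)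
        ≤ (T.dist a b : ℝ) := by
      intro a b
      by_cases hab : a = b
      · subst hab
        simp [SimpleGraph.dist_self, T.irrefl]
      · by_cases hadj : T.Adj a b
        · rw [if_neg hab, if_pos hadj]
          rw [SimpleGraph.dist_eq_one_iff_adj.mpr hadj]
          norm_num
        · rw [if_neg hab, if_neg hadj]
          have hd1 : T.dist a b ≠ 1 := fun h => hadj (SimpleGraph.dist_eq_one_iff_adj.mp h)
          have hd0 : 0 < T.dist a b := hconn.pos_dist_of_ne hab
          have : 2 ≤ T.dist a b := by omega
          calc ((2:ℝ) - 0) = ((2:ℕ) : ℝ) := by norm_num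
            _ ≤ (T.dist a b : ℝ) := by exact_mod_cast this
    have hsum1 : ∀ a : V, ∑ b, ((if a = b then 0 else 2) : ℝ) = 2 * (n - 1) := by
      intro a
      rw [← Finset.add_sum_erase _ _ (Finset.mem_univ a), if_pos rfl, zero_add]
      have hr : ∀ b ∈ Finset.univ.erase a, ((if a = b then 0 else 2) : ℝ) = 2 := by
        intro b hb
        rw [if_neg (fun h => (Finset.mem_erase.mp hb).1 h.symm)]
      rw [Finset.sum_congr rfl hr, Finset.sum_const, Finset.card_erase_of_mem (Finset.mem_univ a),
        Finset.card_univ, nsmul_eq_mul, Nat.cast_sub (by omega), Nat.cast_one, hn']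
      ring
    have hsum2 : ∀ a : V, ∑ b, ((if T.Adj a b then 1 else 0) : ℝ) = (T.degree a : ℝ) := by
      intro a
      rw [Finset.sum_boole]
      congr 1
      rw [← SimpleGraph.card_neighborFinset_eq_degree, SimpleGraph.neighborFinset_eq_filter]
    calc 2*(n-1)^2 = ∑ a : V, (2*(n-1) - (T.degree a : ℝ)) := by
          rw [Finset.sum_sub_distrib, Finset.sum_const, Finset.card_univ, hdegsum, nsmul_eq_mul]
          rw [hn']
          ring
      _ = ∑ a : V, ∑ b, ((if a = b then 0 else 2) - (if T.Adj a b then 1 else 0) : ℝ) := by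
          apply Finset.sum_congr rfl
          intro a _
          rw [Finset.sum_sub_distrib, hsum1 a, hsum2 a]
      _ ≤ ∑ a : V, ∑ b, (T.dist a b : ℝ) :=
          Finset.sum_le_sum fun a _ => Finset.sum_le_sum fun b _ => hpt a b
      _ = S := rfl
  -- leaf count bounds
  have hl0 : 0 ≤ l := by rw [hl]; positivity
  have hlle : l ≤ n - 1 := by
    have hv : ∃ v : V, T.degree v ≠ 1 := by
      by_contra h
      push_neg at h
      have h1 : ∑ v, T.degree v = Fintype.card V := by simp [h]
      have h2 := T.sum_degrees_eq_twice_card_edges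
      have h3 := hTree.card_edgeFinset
      omega
    obtain ⟨v, hv⟩ := hv
    have hsub : (Finset.univ.filter fun x : V => T.degree x = 1) ⊆ Finset.univ.erase v := by
      intro x hx
      rw [Finset.mem_erase]
      exact ⟨fun h => hv (h ▸ (Finset.mem_filter.mp hx).2), Finset.mem_univ x⟩
    have hcard := Finset.card_le_card hsub
    rw [Finset.card_erase_of_mem (Finset.mem_univ v), Finset.card_univ] at hcard
    rw [hl, hn']
    have : ((Finset.univ.filter fun x : V => T.degree x = 1).card : ℝ)
        ≤ ((Fintype.card V - 1 : ℕ) : ℝ) := by exact_mod_cast hcard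
    calc ((Finset.univ.filter fun x : V => T.degree x = 1).card : ℝ)
        ≤ ((Fintype.card V - 1 : ℕ) : ℝ) := this
      _ = (Fintype.card V : ℝ) - 1 := by rw [Nat.cast_sub (by omega)]; norm_num
  -- the negative-type inequality
  set w : V → ℝ := fun v => -(n/2) * η v + s/2 with hwdef
  set z : V → ℝ := fun k => ∑ m, (T.dist k m : ℝ) * w m with hzdef
  set y : V → ℝ := fun v => n * η v - s with hydef
  have hcardn : (Fintype.card V : ℝ) = n := hn'.symm
  have hsumw : ∑ m, w m = 0 := by
    simp only [hwdef]
    rw [Finset.sum_add_distrib, Finset.sum_const, Finset.card_univ, nsmul_eq_mul, hcardn,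
      ← Finset.mul_sum, ← hs]
    ring
  have hsumy : ∑ m, y m = 0 := by
    simp only [hydef]
    rw [Finset.sum_sub_distrib, Finset.sum_const, Finset.card_univ, nsmul_eq_mul, hcardn,
      ← Finset.mul_sum, ← hs]
    ring
  have hLz : ∀ k, (T.degree k : ℝ) * z k - ∑ j ∈ T.neighborFinset k, z j = y k := by
    intro k
    have h := Stmt17Aux.LD T hconn hacyc w k
    rw [hsumw] at h
    simp only [hzdef, hydef]
    rw [h, hwdef]
    ring
  set u : V → ℝ := fun a => ∑ b, (T.dist a b : ℝ) * y b with hudef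
  have hLu : ∀ k, (T.degree k : ℝ) * u k - ∑ j ∈ T.neighborFinset k, u j = -2 * y k := by
    intro k
    have h := Stmt17Aux.LD T hconn hacyc y k
    rw [hsumy] at h
    simp only [hudef]
    rw [h]
    ring
  have hsym : ∑ k, ((T.degree k : ℝ) * z k - ∑ j ∈ T.neighborFinset k, z j) * u k
      = ∑ k, z k * ((T.degree k : ℝ) * u k - ∑ j ∈ T.neighborFinset k, u j) := by
    have hsw := Stmt17Aux.swap_nbrs T (fun a b => z b * u a)
    simp only [sub_mul, mul_sub]
    rw [Finset.sum_sub_distrib, Finset.sum_sub_distrib]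
    congr 1
    · apply Finset.sum_congr rfl
      intro k _
      ring
    · have e1 : ∀ k : V, (∑ j ∈ T.neighborFinset k, z j) * u k
          = ∑ j ∈ T.neighborFinset k, z j * u k := fun k => Finset.sum_mul ..
      have e2 : ∀ k : V, z k * (∑ j ∈ T.neighborFinset k, u j)
          = ∑ j ∈ T.neighborFinset k, z j * u k → True := fun _ _ => trivial
      rw [Finset.sum_congr rfl fun k _ => e1 k,
        Finset.sum_congr rfl fun k _ => (Finset.mul_sum _ _ _ : z k * (∑ j ∈ T.neighborFinset k, u j) = _)]
      exact hsw
  have hQ := Stmt17Aux.psd T z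
  have hzy : ∑ k, z k * y k = ∑ k, z k * ((T.degree k : ℝ) * z k - ∑ j ∈ T.neighborFinset k, z j) :=
    Finset.sum_congr rfl fun k _ => by rw [hLz k]
  have hyu_le : ∑ k, y k * u k ≤ 0 := by
    have e1 : ∑ k, y k * u k
        = ∑ k, ((T.degree k : ℝ) * z k - ∑ j ∈ T.neighborFinset k, z j) * u k :=
      Finset.sum_congr rfl fun k _ => by rw [hLz k]
    have e2 : ∑ k, z k * ((T.degree k : ℝ) * u k - ∑ j ∈ T.neighborFinset k, u j)
        = ∑ k, z k * (-2 * y k) :=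
      Finset.sum_congr rfl fun k _ => by rw [hLu k]
    have e3 : ∑ k, z k * (-2 * y k) = -2 * ∑ k, z k * y k := by
      rw [Finset.mul_sum]
      exact Finset.sum_congr rfl fun k _ => by ring
    rw [e1, hsym, e2, e3, hzy]
    linarith
  have hueq : ∀ a, u a = n * (lam * η a) - s * Tr a := by
    intro a
    simp only [hudef, hydef]
    calc ∑ b, (T.dist a b : ℝ) * (n * η b - s)
        = ∑ b, (n * ((T.dist a b : ℝ) * η b) - s * (T.dist a b : ℝ)) := by
          apply Finset.sum_congr rfl
          intro b _
          ring
      _ = n * (∑ b, (T.dist a b : ℝ) * η b) - s * ∑ b, (T.dist a b : ℝ) := by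
          rw [Finset.sum_sub_distrib, Finset.mul_sum, Finset.mul_sum]
      _ = n * (lam * η a) - s * Tr a := by rw [heig a]
  have hyu : ∑ k, y k * u k = n^2*lam - 2*n*lam*s^2 + s^2*S := by
    calc ∑ k, y k * u k
        = ∑ k, (n^2*lam*(η k)^2 - n*s*(Tr k * η k) - n*lam*s*η k + s^2 * Tr k) := by
          apply Finset.sum_congr rfl
          intro k _
          rw [hueq k]
          simp only [hydef]
          ring
      _ = n^2*lam*(∑ k, (η k)^2) - n*s*(∑ k, Tr k * η k) - n*lam*s*(∑ k, η k)
          + s^2*(∑ k, Tr k) := by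
          rw [Finset.sum_add_distrib, Finset.sum_sub_distrib, Finset.sum_sub_distrib,
            ← Finset.mul_sum, ← Finset.mul_sum, ← Finset.mul_sum, ← Finset.mul_sum]
      _ = n^2*lam - 2*n*lam*s^2 + s^2*S := by
          rw [hηnorm, hTreta, ← hs, ← hSdef]
          ring
  have hstar : n^2*lam - 2*n*lam*s^2 + s^2*S ≤ 0 := hyu ▸ hyu_le
  -- final algebra
  have hC : 0 < 2*n*lam - S := by
    by_contra hc
    push_neg at hc
    nlinarith [sq_nonneg s]
  have hP : 0 < lam - l + 2 := by linarith
  have hk0 : 0 ≤ n - l - 1 := by linarith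
  have hB : (2*n*lam - S) * (n*lam/2 + n - l - 1) < lam * n^2 * (lam - l + 2) := by
    have t1 : 0 ≤ (n*lam/2 + (n-l-1)) * (S - 2*(n-1)^2) := by
      apply mul_nonneg
      · positivity
      · linarith
    have t2 : 0 < n*lam*(n+1) := by positivity
    have t3 : 0 ≤ n*lam*(n-2)*(n-l-1) :=
      mul_nonneg (mul_nonneg (by positivity) (by linarith)) hk0
    have t4 : 0 ≤ 2*(n-l-1)*(n-1)^2 := by positivity
    nlinarith [t1, t2, t3, t4]
  have hmain : n*lam/2 + n - l - 1 < s^2 * (lam - l + 2) := by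
    have h1 : n^2 * lam ≤ s^2 * (2*n*lam - S) := by nlinarith [hstar]
    have h2 : n^2*lam * (lam - l + 2) ≤ s^2 * (2*n*lam - S) * (lam - l + 2) :=
      mul_le_mul_of_nonneg_right h1 (le_of_lt hP)
    have h3 : (2*n*lam - S) * (n*lam/2 + n - l - 1) < (2*n*lam - S) * (s^2 * (lam - l + 2)) := by
      nlinarith [hB, h2]
    exact lt_of_mul_lt_mul_left h3 (le_of_lt hC)
  have hrw : n / 2 * (lam / (lam - l + 2)) + (n - l - 1) / (lam - l + 2)
      = (n*lam/2 + n - l - 1) / (lam - l + 2) := by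
    field_simp
    ring
  rw [gt_iff_lt, hrw, div_lt_iff₀ hP]
  exact hmain
end

section
/- Let T be the star graph on n ≥ 3 vertices (one center adjacent to n−1 leaves), with distance matrix D, Perron root λ, and entrywise nonnegative unit eigenvector η with Dη = λη и ‖η‖₂ = 1. Then ⟨η, 𝟏⟩² > n − 1. -/
/-- The star graph on `n` vertices: vertex `0` (the center) is adjacent to every other
vertex, and there are no further edges. -/
def starGraph (n : ℕ) : SimpleGraph (Fin n) :=
  SimpleGraph.fromRel (fun x _ => x.val = 0)

/-- For the star graph on `n ≥ 3` vertices with distance matrix `D`,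
Perron root `λ` and entrywise nonnegative unit eigenvector `η`, one has
`⟨η,𝟏⟩² > n − 1`. -/
theorem stmt_18 (n : ℕ) (hn : 3 ≤ n)
    (D : Matrix (Fin n) (Fin n) ℝ) (hD : ∀ a b, D a b = ((starGraph n).dist a b : ℝ))
    (lam : ℝ) (η : Fin n → ℝ)
    (hη0 : ∀ i, 0 ≤ η i) (hηnorm : ∑ i, (η i) ^ 2 = 1)
    (hηeig : D.mulVec η = lam • η)
    (hmax : ∀ μ : ℝ, (∃ x : Fin n → ℝ, x ≠ 0 ∧ D.mulVec x = μ • x) → μ ≤ lam) :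
    (∑ i, η i) ^ 2 > (n : ℝ) - 1 := by
  haveI : NeZero n := ⟨by omega⟩
  have h1v : (1 : Fin n).val = 1 := by
    simp [Fin.val_one', Nat.mod_eq_of_lt (by omega : 1 < n)]
  have h10 : (1 : Fin n) ≠ 0 := by
    intro h
    rw [h] at h1v; simp at h1v
  -- adjacency
  have hadj : ∀ a b : Fin n, (starGraph n).Adj a b ↔ a ≠ b ∧ (a = 0 ∨ b = 0) := by
    intro a b
    unfold starGraph
    rw [SimpleGraph.fromRel_adj]
    simp only [ne_eq, and_congr_right_iff]
    intro _
    constructor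
    · rintro (h | h)
      · exact Or.inl (Fin.ext h)
      · exact Or.inr (Fin.ext h)
    · rintro (h | h)
      · exact Or.inl (by rw [h]; rfl)
      · exact Or.inr (by rw [h]; rfl)
  -- distances
  have hDdiag : ∀ a : Fin n, D a a = 0 := by
    intro a; rw [hD]; simp
  have hadj0 : ∀ a : Fin n, a ≠ 0 → (starGraph n).Adj a 0 := by
    intro a ha; rw [hadj]; exact ⟨ha, Or.inr rfl⟩
  have hD1 : ∀ a b : Fin n, a ≠ b → (a = 0 ∨ b = 0) → D a b = 1 := by
    intro a b hab h0
    rw [hD]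
    norm_cast
    rw [SimpleGraph.dist_eq_one_iff_adj, hadj]
    exact ⟨hab, h0⟩
  have hD2 : ∀ a b : Fin n, a ≠ b → a ≠ 0 → b ≠ 0 → D a b = 2 := by
    intro a b hab ha hb
    have hle : (starGraph n).dist a b ≤ 2 := by
      have := SimpleGraph.dist_le (SimpleGraph.Walk.cons (hadj0 a ha)
        (SimpleGraph.Walk.cons ((starGraph n).adj_symm (hadj0 b hb)) SimpleGraph.Walk.nil))
      simpa using this
    have hne0 : (starGraph n).dist a b ≠ 0 := by
      intro h0
      rcases SimpleGraph.dist_eq_zero_iff_eq_or_not_reachable.mp h0 with h | h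
      · exact hab h
      · exact h ⟨SimpleGraph.Walk.cons (hadj0 a ha)
          (SimpleGraph.Walk.cons ((starGraph n).adj_symm (hadj0 b hb)) SimpleGraph.Walk.nil)⟩
    have hne1 : (starGraph n).dist a b ≠ 1 := by
      intro h1
      have := SimpleGraph.dist_eq_one_iff_adj.mp h1
      rw [hadj] at this
      rcases this with ⟨-, h | h⟩
      exacts [ha h, hb h]
    rw [hD]
    have : (starGraph n).dist a b = 2 := by omega
    rw [this]; norm_num
  -- row equations
  have hrow : ∀ i, ∑ j, D i j * η j = lam * η i := by
    intro i
    have := congrFun hηeig i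
    simpa [Matrix.mulVec, dotProduct] using this
  set T := ∑ i, η i with hTdef
  set a := η 0 with hadef
  set t := η 1 with htdef
  set M : ℝ := (n : ℝ) - 1 with hMdef
  have hM2 : (2 : ℝ) ≤ M := by
    rw [hMdef]
    have : (3 : ℝ) ≤ (n : ℝ) := by exact_mod_cast hn
    linarith
  -- row 0
  have e0 : T - a = lam * a := by
    have := hrow 0
    have hterm : ∀ j : Fin n, D 0 j * η j = η j - (if j = 0 then η j else 0) := by
      intro j
      by_cases hj : j = 0
      · subst hj; rw [hDdiag]; simp
      · rw [hD1 0 j (fun h => hj h.symm) (Or.inl rfl)]; simp [hj]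
    rw [Finset.sum_congr rfl (fun j _ => hterm j)] at this
    rw [Finset.sum_sub_distrib, Finset.sum_ite_eq' Finset.univ (0 : Fin n) η] at this
    simpa [hTdef, hadef] using this
  -- leaf rows
  have eI : ∀ i : Fin n, i ≠ 0 → 2 * T - 2 * η i - a = lam * η i := by
    intro i hi
    have := hrow i
    have hterm : ∀ j : Fin n,
        D i j * η j = 2 * η j - (if j = i then 2 * η j else 0) - (if j = 0 then η j else 0) := by
      intro j
      by_cases hji : j = i
      · subst hji; rw [hDdiag]; simp [hi]
      · by_cases hj0 : j = 0
        · subst hj0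
          rw [hD1 i 0 hi (Or.inr rfl)]
          rw [if_neg hji, if_pos rfl]
          ring
        · rw [hD2 i j (fun h => hji h.symm) hi hj0]
          rw [if_neg hji, if_neg hj0]
          ring
    rw [Finset.sum_congr rfl (fun j _ => hterm j)] at this
    rw [Finset.sum_sub_distrib, Finset.sum_sub_distrib, ← Finset.mul_sum,
      Finset.sum_ite_eq' Finset.univ i (fun j => 2 * η j),
      Finset.sum_ite_eq' Finset.univ (0 : Fin n) η] at this
    simpa [hTdef, hadef] using this
  -- lam ≠ -2
  have hlamne : lam ≠ -2 := by
    intro h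
    subst h
    have h1 := eI 1 h10
    -- 2T - 2t - a = -2t  ⇒  2T = a
    have h2T : 2 * T = a := by linarith [h1]
    -- T - a = -2a ⇒ T = -a
    have hTa : T = -a := by linarith [e0]
    have ha0 : a = 0 := by linarith
    have hT0 : T = 0 := by linarith
    have hall : ∀ i : Fin n, η i = 0 := by
      have := (Finset.sum_eq_zero_iff_of_nonneg (fun i _ => hη0 i)).mp hT0
      intro i; exact this i (Finset.mem_univ i)
    rw [Finset.sum_congr rfl (fun i _ => by rw [hall i]; norm_num : ∀ i ∈ Finset.univ, η i ^ 2 = 0)] at hηnorm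
    simp at hηnorm
  -- all leaves equal t
  have hleaf : ∀ i : Fin n, i ≠ 0 → η i = t := by
    intro i hi
    have h1 := eI i hi
    have h2 := eI 1 h10
    have : (lam + 2) * η i = (lam + 2) * t := by
      rw [htdef]; nlinarith [h1, h2]
    have hne : lam + 2 ≠ 0 := fun h => hlamne (by linarith)
    exact mul_left_cancel₀ hne this
  -- T = a + M t
  have hcard : ((Finset.univ.erase (0 : Fin n)).card : ℝ) = M := by
    rw [Finset.card_erase_of_mem (Finset.mem_univ _), Finset.card_univ, Fintype.card_fin]
    rw [hMdef]
    have : 1 ≤ n := by omega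
    push_cast [Nat.cast_sub this]
    ring
  have hT : T = a + M * t := by
    rw [hTdef, ← Finset.add_sum_erase Finset.univ η (Finset.mem_univ (0 : Fin n))]
    rw [Finset.sum_congr rfl (fun i hi => hleaf i (Finset.ne_of_mem_erase hi))]
    rw [Finset.sum_const, nsmul_eq_mul, hcard, hadef]
  have hnorm2 : a ^ 2 + M * t ^ 2 = 1 := by
    rw [← hηnorm, ← Finset.add_sum_erase Finset.univ (fun i => η i ^ 2) (Finset.mem_univ (0 : Fin n))]
    rw [Finset.sum_congr rfl (fun i hi => by rw [hleaf i (Finset.ne_of_mem_erase hi)] :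
      ∀ i ∈ Finset.univ.erase 0, η i ^ 2 = t ^ 2)]
    rw [Finset.sum_const, nsmul_eq_mul, hcard, hadef]
  -- scalar eigen equations
  have e0' : M * t = lam * a := by
    have := e0; rw [hT] at this; linarith
  have e1' : a + 2 * M * t - 2 * t = lam * t := by
    have := eI 1 h10
    rw [hT, ← htdef] at this
    linarith
  have ha0 : 0 ≤ a := hη0 0
  have ht0 : 0 ≤ t := hη0 1
  -- a > 0
  have hapos : 0 < a := by
    rcases lt_or_eq_of_le ha0 with h | h
    · exact h
    · exfalso
      have hMt : M * t = 0 := by rw [e0', ← h]; ring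
      have ht : t = 0 := by
        rcases mul_eq_zero.mp hMt with h' | h'
        · linarith
        · exact h'
      rw [← h, ht] at hnorm2
      norm_num at hnorm2
  -- t > 0
  have htpos : 0 < t := by
    rcases lt_or_eq_of_le ht0 with h | h
    · exact h
    · exfalso
      rw [← h] at e1'
      have : a = 0 := by linarith
      linarith
  -- lam > 2M - 2
  have hlam : 2 * M - 2 < lam := by
    nlinarith [e1', mul_pos htpos hapos]
  -- conclude
  show T ^ 2 > M
  rw [hT]
  have key : (a + M * t) ^ 2 - M = (2 * lam - M + 1) * a ^ 2 := by
    linear_combination M * hnorm2 + (2 * a) * e0'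
  nlinarith [mul_pos (show (0:ℝ) < 2 * lam - M + 1 by linarith) (mul_pos hapos hapos), key, sq_nonneg a]
end
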